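/- For every arbitrary strategy μ of Min in the closed region graph T̄, every ε > 0, every type-preserving boundary strategy χ of Max, every strategy χ_ε that is ε-close to χ, every configuration q, and every n ∈ ℕ, the total time of the first n transitions of the run from q under (μ,χ_ε) is at least that of the run from q under (μ[q,χ_ε],χ) minus n·ε, where μ[q,χ_ε] is any type-preserving boundary strategy of Min such that the run from q under (μ[q,χ_ε],χ) has the same type as the run from q under (μ,χ_ε). Symmetrically, for every arbitrary strategy χ of Max in T̄, every ε > 0, every type-preserving boundary strategy μ of Min, every strategy μ_ε that is ε-close to μ, every configuration q and every n ∈ ℕ, the total time of the first n transitions of the run from q under (μ_ε,χ) is at most that of the run from q under (μ_ε-induced type-matching strategy pair (μ,χ[q,μ_ε])) plus n·ε, where χ[q,μ_ε] is any type-preserving boundary strategy of Max such that the run from q under (μ,χ[q,μ_ε]) has the same type as the run from q under (μ_ε,χ). -/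

import Mathlib

noncomputable section

attribute [local instance] Classical.propDecidable

/-- A two-player (Min/Max) game arena with real-valued step costs. -/
structure Arena (Conf Move : Type) where
  Tr : Conf → Move → Conf → Prop
  cost : Conf → Move → ℝ
  IsMin : Conf → Prop

namespace Arena

variable {Conf Move : Type}

/-- A finite run in the arena. -/
structure FinRun (G : Arena Conf Move) where
  n : ℕ
  q : Fin (n + 1) → Conf
  m : Fin n → Move
  valid : ∀ i : Fin n, G.Tr (q i.castSucc) (m i) (q i.succ)

/-- The last configuration of a finite run. -/
def FinRun.last {G : Arena Conf Move} (r : G.FinRun) : Conf := r.q (Fin.last r.n)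

/-- The first configuration of a finite run. -/
def FinRun.first {G : Arena Conf Move} (r : G.FinRun) : Conf := r.q 0

/-- The trivial run consisting of a single configuration. -/
def single (G : Arena Conf Move) (q0 : Conf) : G.FinRun :=
  ⟨0, fun _ => q0, Fin.elim0, fun i => i.elim0⟩

/-- Extending a finite run by one transition. -/
def FinRun.extend {G : Arena Conf Move} (r : G.FinRun) (mv : Move) (q' : Conf)
    (h : G.Tr r.last mv q') : G.FinRun where
  n := r.n + 1
  q := Fin.snoc r.q q'
  m := Fin.snoc r.m mv
  valid := by
    intro i
    induction i using Fin.lastCases with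
    | last =>
        simpa only [FinRun.last, Fin.snoc_castSucc, Fin.succ_last, Fin.snoc_last] using h
    | cast j =>
        simp only [Fin.snoc_castSucc]
        rw [Fin.succ_castSucc, Fin.snoc_castSucc]
        exact r.valid j

/-- Strategies of player Min: mappings from finite runs to moves that are
available whenever the last configuration belongs to Min. -/
def MinStrategy (G : Arena Conf Move) : Type :=
  {σ : G.FinRun → Move // ∀ r : G.FinRun, G.IsMin r.last → ∃ q', G.Tr r.last (σ r) q'}

/-- Strategies of player Max. -/
def MaxStrategy (G : Arena Conf Move) : Type :=
  {σ : G.FinRun → Move // ∀ r : G.FinRun, ¬ G.IsMin r.last → ∃ q', G.Tr r.last (σ r) q'}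

/-- A strategy is positional if its choice depends only on the last configuration. -/
def Positional {G : Arena Conf Move} (σ : G.FinRun → Move) : Prop :=
  ∀ r r' : G.FinRun, r.last = r'.last → σ r = σ r'

/-- The finite prefixes of the unique play from `q0` in which Min uses `μ`
and Max uses `χ`. -/
def play (G : Arena Conf Move) (μ : G.MinStrategy) (χ : G.MaxStrategy) (q0 : Conf) :
    ℕ → G.FinRun
  | 0 => G.single q0
  | n + 1 =>
    let r := G.play μ χ q0 n
    if h : G.IsMin r.last then
      r.extend (μ.1 r) (Classical.choose (μ.2 r h)) (Classical.choose_spec (μ.2 r h))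
    else
      r.extend (χ.1 r) (Classical.choose (χ.2 r h)) (Classical.choose_spec (χ.2 r h))

/-- Total cost (e.g. total time) of a finite run. -/
def FinRun.time {G : Arena Conf Move} (r : G.FinRun) : ℝ :=
  ∑ i : Fin r.n, G.cost (r.q i.castSucc) (r.m i)

/-- Payoff of player Min (to be minimised): limsup of average cost. -/
def AMin (G : Arena Conf Move) (q0 : Conf) (μ : G.MinStrategy) (χ : G.MaxStrategy) : ℝ :=
  Filter.limsup (fun n : ℕ => (G.play μ χ q0 n).time / n) Filter.atTop

/-- Payoff of player Max (to be maximised): liminf of average cost. -/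
def AMax (G : Arena Conf Move) (q0 : Conf) (μ : G.MinStrategy) (χ : G.MaxStrategy) : ℝ :=
  Filter.liminf (fun n : ℕ => (G.play μ χ q0 n).time / n) Filter.atTop

/-- Upper value of the game at `q0`. -/
def upperVal (G : Arena Conf Move) (q0 : Conf) : ℝ :=
  ⨅ μ : G.MinStrategy, ⨆ χ : G.MaxStrategy, G.AMin q0 μ χ

/-- Lower value of the game at `q0`. -/
def lowerVal (G : Arena Conf Move) (q0 : Conf) : ℝ :=
  ⨆ χ : G.MaxStrategy, ⨅ μ : G.MinStrategy, G.AMax q0 μ χ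

/-- The value of the game at `q0` (meaningful when the game is determined). -/
def val (G : Arena Conf Move) (q0 : Conf) : ℝ := G.upperVal q0

end Arena
/-- `k`-bounded clock valuations. -/
def IsVal (k : ℕ) {C : Type} (ν : C → ℝ) : Prop := ∀ c, 0 ≤ ν c ∧ ν c ≤ (k : ℝ)

/-- Two clock valuations satisfy exactly the same simple clock constraints
`c ⋈ i` and `c − c' ⋈ i` with `i ∈ {0,…,k}` and `⋈ ∈ {<,=,>}` (hence also ≤, ≥). -/
def RegEq (k : ℕ) {C : Type} (ν ν' : C → ℝ) : Prop :=
  ∀ i : ℕ, i ≤ k → ∀ c c' : C,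
    ((ν c < (i : ℝ) ↔ ν' c < (i : ℝ)) ∧ (ν c = (i : ℝ) ↔ ν' c = (i : ℝ)) ∧
      ((i : ℝ) < ν c ↔ (i : ℝ) < ν' c)) ∧
    ((ν c - ν c' < (i : ℝ) ↔ ν' c - ν' c' < (i : ℝ)) ∧
      (ν c - ν c' = (i : ℝ) ↔ ν' c - ν' c' = (i : ℝ)) ∧
      ((i : ℝ) < ν c - ν c' ↔ (i : ℝ) < ν' c - ν' c'))

/-- An average-time game on a (bounded) timed automaton: a timed automaton
together with a partition of locations between players Min and Max. -/
structure TimedGame where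
  L : Type
  C : Type
  A : Type
  finL : Finite L
  finC : Finite C
  finA : Finite A
  k : ℕ
  S : Set (L × (C → ℝ))
  En : A → Set (L × (C → ℝ))
  δ : L → A → L
  ϱ : A → Set C
  LMin : Set L
  bounded : ∀ s ∈ S, IsVal k s.2
  S_zone : (∀ (ℓ : L) (ν ν' : C → ℝ), RegEq k ν ν' → ((ℓ, ν) ∈ S ↔ (ℓ, ν') ∈ S)) ∧
    ∀ ℓ : L, Convex ℝ {ν : C → ℝ | (ℓ, ν) ∈ S}
  En_sub : ∀ a, En a ⊆ S
  En_zone : ∀ a : A,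
    (∀ (ℓ : L) (ν ν' : C → ℝ), RegEq k ν ν' → ((ℓ, ν) ∈ En a ↔ (ℓ, ν') ∈ En a)) ∧
    ∀ ℓ : L, Convex ℝ {ν : C → ℝ | (ℓ, ν) ∈ En a}
  nonstuck : ∀ s ∈ S, ∃ (t : ℝ) (a : A), 0 ≤ t ∧
    (∀ t', 0 ≤ t' → t' ≤ t → (s.1, fun c => s.2 c + t') ∈ S) ∧
    ((s.1, fun c => s.2 c + t) ∈ En a) ∧
    ((δ s.1 a, fun c => if c ∈ ϱ a then 0 else s.2 c + t) ∈ S)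

namespace TimedGame

/-- Configurations of the timed automaton. -/
abbrev Q (T : TimedGame) : Type := T.L × (T.C → ℝ)

/-- Resetting the clocks in `X` to zero. -/
def resetv (T : TimedGame) (ν : T.C → ℝ) (X : Set T.C) : T.C → ℝ :=
  fun c => if c ∈ X then 0 else ν c

/-- The successor configuration after the timed action `τ = (t, a)`. -/
def tsucc (T : TimedGame) (s : T.Q) (τ : ℝ × T.A) : T.Q :=
  (T.δ s.1 τ.2, T.resetv (fun c => s.2 c + τ.1) (T.ϱ τ.2))

/-- The transition relation `s →_τ s'` of the timed automaton. -/
def Trans (T : TimedGame) (s : T.Q) (τ : ℝ × T.A) (s' : T.Q) : Prop :=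
  0 ≤ τ.1 ∧ (∀ t', 0 ≤ t' → t' ≤ τ.1 → (s.1, fun c => s.2 c + t') ∈ T.S) ∧
  ((s.1, fun c => s.2 c + τ.1) ∈ T.En τ.2) ∧ s' = T.tsucc s τ ∧ s' ∈ T.S

/-- The game arena of the average-time game played on the timed automaton. -/
def taArena (T : TimedGame) : Arena {s : T.Q // s ∈ T.S} (ℝ × T.A) where
  Tr := fun s τ s' => T.Trans s.1 τ s'.1
  cost := fun _ τ => τ.1
  IsMin := fun s => s.1.1 ∈ T.LMin

/-- A clock region: an equivalence class of the region equivalence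
(restricted to `k`-bounded valuations). -/
def IsClockRegion (T : TimedGame) (P : Set (T.C → ℝ)) : Prop :=
  ∃ ν : T.C → ℝ, P = {ν' | IsVal T.k ν' ∧ RegEq T.k ν ν'}

/-- Regions: pairs of a location and a clock region. -/
def Region (T : TimedGame) : Type :=
  T.L × {P : Set (T.C → ℝ) // T.IsClockRegion P}

/-- The clock region of a valuation. -/
def clockRegionOf (T : TimedGame) (ν : T.C → ℝ) : {P : Set (T.C → ℝ) // T.IsClockRegion P} :=
  ⟨{ν' | IsVal T.k ν' ∧ RegEq T.k ν ν'}, ⟨ν, rfl⟩⟩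

/-- The region `[s]` of a configuration `s`. -/
def regionOf (T : TimedGame) (s : T.Q) : T.Region := (s.1, T.clockRegionOf s.2)

/-- The configurations `Ω` of the region graphs: pairs of a configuration
of the timed automaton and a region. -/
abbrev Omega (T : TimedGame) : Type := T.Q × T.Region

/-- `(s, (ℓ, P))` is a state of the closed region graph: the locations match
and `s`'s valuation lies in the closure of the clock region `P`. -/
def barS (T : TimedGame) (q : T.Omega) : Prop :=
  q.1.1 = q.2.1 ∧ q.1.2 ∈ closure q.2.2.1

/-- `(s, (ℓ, P))` is a state of the region graph: the locations match and
`s`'s valuation lies in the clock region `P`. -/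
def tildeS (T : TimedGame) (q : T.Omega) : Prop :=
  q.1.1 = q.2.1 ∧ q.1.2 ∈ q.2.2.1

/-- `R →_* R'` : the region `R'` is a time successor of `R`. -/
def timeSucc (T : TimedGame) (R R' : T.Region) : Prop :=
  R.1 = R'.1 ∧ ∀ ν ∈ R.2.1, ∃ t : ℝ, 0 ≤ t ∧
    (∀ t', 0 ≤ t' → t' ≤ t → (R.1, fun c => ν c + t') ∈ T.S) ∧
    (fun c => ν c + t) ∈ R'.2.1

/-- The discrete transition `s →^a s'` of the timed automaton. -/
def astep (T : TimedGame) (s : T.Q) (a : T.A) (s' : T.Q) : Prop :=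
  s ∈ T.S ∧ s' ∈ T.S ∧ s ∈ T.En a ∧ s' = (T.δ s.1 a, T.resetv s.2 (T.ϱ a))

/-- `R →^a R'` at the level of regions. -/
def regAct (T : TimedGame) (R : T.Region) (a : T.A) (R' : T.Region) : Prop :=
  ∃ ν ∈ R.2.1, ∃ ν' ∈ R'.2.1, T.astep (R.1, ν) a (R'.1, ν')

/-- Moves of the region graphs: a delay, an intermediate region, and an action. -/
abbrev RMove (T : TimedGame) : Type := ℝ × T.Region × T.A

/-- Transitions underlying pre-runs: `(s', R') = succ((s,R), (t,R'',a))` with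
`R →_* R'' →^a R'`. -/
def preTrans (T : TimedGame) (q : T.Omega) (m : T.RMove) (q' : T.Omega) : Prop :=
  0 ≤ m.1 ∧ T.timeSucc q.2 m.2.1 ∧ T.regAct m.2.1 m.2.2 q'.2 ∧
  q'.1 = T.tsucc q.1 (m.1, m.2.2)

/-- Labelled transitions of the closed region graph `T̄`. -/
def cTrans (T : TimedGame) (q : T.Omega) (m : T.RMove) (q' : T.Omega) : Prop :=
  T.preTrans q m q' ∧ T.barS q ∧ T.barS q' ∧
  (fun c => q.1.2 c + m.1) ∈ closure m.2.1.2.1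

/-- Labelled transitions of the boundary region graph `T̂`: additionally the
intermediate valuation lies on the boundary of the intermediate region. -/
def bTrans (T : TimedGame) (q : T.Omega) (m : T.RMove) (q' : T.Omega) : Prop :=
  T.cTrans q m q' ∧ (fun c => q.1.2 c + m.1) ∈ frontier m.2.1.2.1

/-- Labelled transitions of the region graph `T̃`. -/
def rTrans (T : TimedGame) (q : T.Omega) (m : T.RMove) (q' : T.Omega) : Prop :=
  T.preTrans q m q' ∧ T.tildeS q ∧ T.tildeS q' ∧
  (fun c => q.1.2 c + m.1) ∈ m.2.1.2.1

/-- The arena of pre-runs over `Ω`. -/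
def preArena (T : TimedGame) : Arena T.Omega T.RMove where
  Tr := T.preTrans
  cost := fun _ m => m.1
  IsMin := fun q => q.2.1 ∈ T.LMin

/-- Finite pre-runs. -/
abbrev PreRunF (T : TimedGame) : Type := (T.preArena).FinRun

/-- Pre-strategies of Min. -/
abbrev MinPre (T : TimedGame) : Type := (T.preArena).MinStrategy

/-- Pre-strategies of Max. -/
abbrev MaxPre (T : TimedGame) : Type := (T.preArena).MaxStrategy

/-- A pre-strategy of Min is a strategy in the closed region graph `T̄`
if it always waits into the closure of the chosen intermediate region. -/
def MinClosed (T : TimedGame) (μ : T.MinPre) : Prop :=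
  ∀ r : T.PreRunF,
    (fun c => (Arena.FinRun.last r).1.2 c + (μ.1 r).1) ∈ closure (μ.1 r).2.1.2.1

def MaxClosed (T : TimedGame) (χ : T.MaxPre) : Prop :=
  ∀ r : T.PreRunF,
    (fun c => (Arena.FinRun.last r).1.2 c + (χ.1 r).1) ∈ closure (χ.1 r).2.1.2.1

/-- Admissible strategies: strategies in the region graph `T̃`. -/
def MinAdmissible (T : TimedGame) (μ : T.MinPre) : Prop :=
  ∀ r : T.PreRunF,
    (fun c => (Arena.FinRun.last r).1.2 c + (μ.1 r).1) ∈ (μ.1 r).2.1.2.1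

def MaxAdmissible (T : TimedGame) (χ : T.MaxPre) : Prop :=
  ∀ r : T.PreRunF,
    (fun c => (Arena.FinRun.last r).1.2 c + (χ.1 r).1) ∈ (χ.1 r).2.1.2.1

/-- Boundary strategies of Min: the delay is the **infimum** of the delays
reaching the closure of the chosen intermediate region. -/
def MinBoundary (T : TimedGame) (μ : T.MinPre) : Prop :=
  ∀ r : T.PreRunF,
    (μ.1 r).1 = sInf {t : ℝ | 0 ≤ t ∧
      (fun c => (Arena.FinRun.last r).1.2 c + t) ∈ closure (μ.1 r).2.1.2.1}

/-- Boundary strategies of Max: the delay is the **supremum** of the delays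
reaching the closure of the chosen intermediate region. -/
def MaxBoundary (T : TimedGame) (χ : T.MaxPre) : Prop :=
  ∀ r : T.PreRunF,
    (χ.1 r).1 = sSup {t : ℝ | 0 ≤ t ∧
      (fun c => (Arena.FinRun.last r).1.2 c + t) ∈ closure (χ.1 r).2.1.2.1}

/-- The sequence of regions visited by a finite pre-run (its type, part 1). -/
def typeConfs (T : TimedGame) (r : T.PreRunF) : ℕ → Option T.Region :=
  fun i => if h : i < r.n + 1 then some ((r.q ⟨i, h⟩).2) else none

/-- The sequence of intermediate regions and actions of a finite pre-run
(its type, part 2). -/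
def typeMoves (T : TimedGame) (r : T.PreRunF) : ℕ → Option (T.Region × T.A) :=
  fun i => if h : i < r.n then some ((r.m ⟨i, h⟩).2) else none

/-- Two finite pre-runs have the same type. -/
def sameType (T : TimedGame) (r r' : T.PreRunF) : Prop :=
  T.typeConfs r = T.typeConfs r' ∧ T.typeMoves r = T.typeMoves r'

/-- The waiting time `t(s, α)` of the boundary timed action `α = (b, c, a)`. -/
def tOf (T : TimedGame) (s : T.Q) (α : ℕ × T.C × T.A) : ℝ :=
  if s.2 α.2.1 ≤ (α.1 : ℝ) then (α.1 : ℝ) - s.2 α.2.1 else 0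

/-- Type-preserving boundary strategies of Min: runs of the same type are
assigned the same intermediate region, action and boundary timed action. -/
def MinTP (T : TimedGame) (μ : T.MinPre) : Prop :=
  T.MinBoundary μ ∧
  ∀ r r' : T.PreRunF, T.sameType r r' →
    (μ.1 r).2 = (μ.1 r').2 ∧
    ∃ (b : ℕ) (c : T.C), b ≤ T.k ∧
      (μ.1 r).1 = T.tOf (Arena.FinRun.last r).1 (b, c, (μ.1 r).2.2) ∧
      (μ.1 r').1 = T.tOf (Arena.FinRun.last r').1 (b, c, (μ.1 r').2.2)

def MaxTP (T : TimedGame) (χ : T.MaxPre) : Prop :=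
  T.MaxBoundary χ ∧
  ∀ r r' : T.PreRunF, T.sameType r r' →
    (χ.1 r).2 = (χ.1 r').2 ∧
    ∃ (b : ℕ) (c : T.C), b ≤ T.k ∧
      (χ.1 r).1 = T.tOf (Arena.FinRun.last r).1 (b, c, (χ.1 r).2.2) ∧
      (χ.1 r').1 = T.tOf (Arena.FinRun.last r').1 (b, c, (χ.1 r').2.2)

/-- `μ_ε` is `ε`-close to the type-preserving boundary strategy `μ` of Min. -/
def EpsCloseMin (T : TimedGame) (μ με : T.MinPre) (ε : ℝ) : Prop :=
  ∀ r : T.PreRunF, (με.1 r).2 = (μ.1 r).2 ∧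
    (fun c => (Arena.FinRun.last r).1.2 c + (με.1 r).1) ∈ (μ.1 r).2.1.2.1 ∧
    (με.1 r).1 ≤ (μ.1 r).1 + ε

/-- `χ_ε` is `ε`-close to the type-preserving boundary strategy `χ` of Max. -/
def EpsCloseMax (T : TimedGame) (χ χε : T.MaxPre) (ε : ℝ) : Prop :=
  ∀ r : T.PreRunF, (χε.1 r).2 = (χ.1 r).2 ∧
    (fun c => (Arena.FinRun.last r).1.2 c + (χε.1 r).1) ∈ (χ.1 r).2.1.2.1 ∧
    (χ.1 r).1 - ε ≤ (χε.1 r).1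

/-- Upper value of the game on the subgraph of region graphs whose strategies
are the pre-strategies satisfying `PMin`, `PMax` respectively. -/
def upperG (T : TimedGame) (PMin : T.MinPre → Prop) (PMax : T.MaxPre → Prop)
    (q : T.Omega) : ℝ :=
  ⨅ μ : {μ : T.MinPre // PMin μ}, ⨆ χ : {χ : T.MaxPre // PMax χ},
    Arena.AMin T.preArena q μ.1 χ.1

/-- Lower value. -/
def lowerG (T : TimedGame) (PMin : T.MinPre → Prop) (PMax : T.MaxPre → Prop)
    (q : T.Omega) : ℝ :=
  ⨆ χ : {χ : T.MaxPre // PMax χ}, ⨅ μ : {μ : T.MinPre // PMin μ},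
    Arena.AMax T.preArena q μ.1 χ.1

def upperBar (T : TimedGame) : T.Omega → ℝ := T.upperG T.MinClosed T.MaxClosed
def lowerBar (T : TimedGame) : T.Omega → ℝ := T.lowerG T.MinClosed T.MaxClosed
/-- The value of the average-time game on the closed region graph `T̄`. -/
def valBar (T : TimedGame) : T.Omega → ℝ := T.upperBar

def upperHat (T : TimedGame) : T.Omega → ℝ := T.upperG T.MinBoundary T.MaxBoundary
def lowerHat (T : TimedGame) : T.Omega → ℝ := T.lowerG T.MinBoundary T.MaxBoundary
/-- The value of the average-time game on the boundary region graph `T̂`. -/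
def valHat (T : TimedGame) : T.Omega → ℝ := T.upperHat

def upperTilde (T : TimedGame) : T.Omega → ℝ := T.upperG T.MinAdmissible T.MaxAdmissible
def lowerTilde (T : TimedGame) : T.Omega → ℝ := T.lowerG T.MinAdmissible T.MaxAdmissible
/-- The value of the average-time game on the region graph `T̃`. -/
def valTilde (T : TimedGame) : T.Omega → ℝ := T.upperTilde

/-- A function is simple on a set `X` of configurations. -/
def SimpleOn (T : TimedGame) (X : Set T.Omega) (F : T.Omega → ℝ) : Prop :=
  (∃ e : ℤ, ∀ q ∈ X, F q = (e : ℝ)) ∨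
  (∃ (e : ℤ) (c : T.C), ∀ q ∈ X, F q = (e : ℝ) - q.1.2 c)

/-- A function on the configurations of the closed region graph is regionally
simple. -/
def RegionallySimple (T : TimedGame) (F : T.Omega → ℝ) : Prop :=
  ∀ R : T.Region, T.SimpleOn {q : T.Omega | T.barS q ∧ q.2 = R} F

/-- A function on the configurations of the closed region graph is regionally
constant. -/
def RegionallyConstant (T : TimedGame) (F : T.Omega → ℝ) : Prop :=
  ∀ R : T.Region, ∃ v : ℝ, ∀ q : T.Omega, T.barS q → q.2 = R → F q = v

/-- The configuration `(s, [s])` of the region graphs determined by a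
configuration `s` of the timed automaton. -/
def confOf (T : TimedGame) (s : T.Q) : T.Omega := (s, T.regionOf s)

/-- A region is thin if some clock has an integer value throughout its closure. -/
def Thin (T : TimedGame) (R : T.Region) : Prop :=
  ∃ c : T.C, ∀ ν ∈ closure R.2.1, ∃ m : ℤ, ν c = (m : ℝ)

/-- `R'` is the immediate time successor of `R`. -/
def ImmTimeSucc (T : TimedGame) (R R' : T.Region) : Prop :=
  R.1 = R'.1 ∧ ∀ ν ∈ R.2.1, ∃ ε : ℝ, 0 < ε ∧
    ∀ t : ℝ, 0 < t → t < ε → (fun c => ν c + t) ∈ R'.2.1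

end TimedGame
section ArenaHelpers

variable {Conf Move : Type} {G : Arena Conf Move}

lemma extend_last' (r : G.FinRun) (mv : Move) (q' : Conf) (h : G.Tr r.last mv q') :
    (r.extend mv q' h).last = q' := by
  simp [Arena.FinRun.extend, Arena.FinRun.last]

lemma extend_time' (r : G.FinRun) (mv : Move) (q' : Conf) (h : G.Tr r.last mv q') :
    (r.extend mv q' h).time = r.time + G.cost r.last mv := by
  simp [Arena.FinRun.time, Arena.FinRun.extend, Fin.sum_univ_castSucc, Arena.FinRun.last]
  exact (Fin.sum_univ_castSucc (f := fun i : Fin (r.n + 1) => G.cost (r.q i) (Fin.snoc (α := fun _ => Move) r.m mv i))).trans (by simp)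

lemma extend_m_mk (r : G.FinRun) (mv : Move) (q' : Conf) (h : G.Tr r.last mv q')
    {i : ℕ} (hieq : i = r.n) (hi : i < (r.extend mv q' h).n) :
    (r.extend mv q' h).m ⟨i, hi⟩ = mv := by
  subst hieq
  show Fin.snoc (α := fun _ => Move) r.m mv (Fin.last r.n) = mv
  simp

lemma play_succ_def (μ : G.MinStrategy) (χ : G.MaxStrategy) (q0 : Conf) (n : ℕ) :
    G.play μ χ q0 (n + 1) =
      if h : G.IsMin (G.play μ χ q0 n).last then
        (G.play μ χ q0 n).extend (μ.1 (G.play μ χ q0 n))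
          (Classical.choose (μ.2 (G.play μ χ q0 n) h))
          (Classical.choose_spec (μ.2 (G.play μ χ q0 n) h))
      else
        (G.play μ χ q0 n).extend (χ.1 (G.play μ χ q0 n))
          (Classical.choose (χ.2 (G.play μ χ q0 n) h))
          (Classical.choose_spec (χ.2 (G.play μ χ q0 n) h)) := rfl

lemma play_len (μ : G.MinStrategy) (χ : G.MaxStrategy) (q0 : Conf) :
    ∀ n : ℕ, (G.play μ χ q0 n).n = n
  | 0 => rfl
  | n + 1 => by
    rw [play_succ_def]
    split <;> exact congrArg (· + 1) (play_len μ χ q0 n)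

/-- The move played at step `n`. -/
def mvOf (μ : G.MinStrategy) (χ : G.MaxStrategy) (q0 : Conf) (n : ℕ) : Move :=
  if G.IsMin (G.play μ χ q0 n).last then μ.1 (G.play μ χ q0 n) else χ.1 (G.play μ χ q0 n)

lemma play_succ_tr (μ : G.MinStrategy) (χ : G.MaxStrategy) (q0 : Conf) (n : ℕ) :
    G.Tr (G.play μ χ q0 n).last (mvOf μ χ q0 n) ((G.play μ χ q0 (n + 1)).last) := by
  rw [play_succ_def]
  by_cases h : G.IsMin (G.play μ χ q0 n).last
  · rw [dif_pos h, extend_last']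
    unfold mvOf; rw [if_pos h]
    exact Classical.choose_spec _
  · rw [dif_neg h, extend_last']
    unfold mvOf; rw [if_neg h]
    exact Classical.choose_spec _

lemma play_time_succ (μ : G.MinStrategy) (χ : G.MaxStrategy) (q0 : Conf) (n : ℕ) :
    (G.play μ χ q0 (n + 1)).time =
      (G.play μ χ q0 n).time + G.cost (G.play μ χ q0 n).last (mvOf μ χ q0 n) := by
  rw [play_succ_def]
  by_cases h : G.IsMin (G.play μ χ q0 n).last
  · rw [dif_pos h, extend_time']; unfold mvOf; rw [if_pos h]
  · rw [dif_neg h, extend_time']; unfold mvOf; rw [if_neg h]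

lemma play_zero_last (μ : G.MinStrategy) (χ : G.MaxStrategy) (q0 : Conf) :
    (G.play μ χ q0 0).last = q0 := rfl

lemma play_zero_time (μ : G.MinStrategy) (χ : G.MaxStrategy) (q0 : Conf) :
    (G.play μ χ q0 0).time = 0 := by
  simp [Arena.FinRun.time, Arena.play, Arena.single]
  exact Fin.sum_univ_zero _

end ArenaHelpers
section TGHelpers

variable {T : TimedGame}

lemma tOf_diff (s s' : T.Q) (b : ℕ) (c : T.C) (a a' : T.A) :
    T.tOf s (b, c, a) ≤ T.tOf s' (b, c, a') + max (s'.2 c - s.2 c) 0 := by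
  simp only [TimedGame.tOf]
  rcases le_total (s'.2 c - s.2 c) 0 with h | h
  · rw [max_eq_right h]; split_ifs <;> linarith
  · rw [max_eq_left h]; split_ifs <;> linarith

lemma sameType_last_snd {r r' : T.PreRunF} (h : T.sameType r r') (hn : r.n = r'.n) :
    (Arena.FinRun.last r).2 = (Arena.FinRun.last r').2 := by
  have e := congrFun h.1 r.n
  unfold TimedGame.typeConfs at e
  rw [dif_pos (Nat.lt_succ_self _), dif_pos (by omega : r.n < r'.n + 1)] at e
  have e' := Option.some.inj e
  calc (Arena.FinRun.last r).2 = (r.q ⟨r.n, Nat.lt_succ_self _⟩).2 := rfl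
    _ = (r'.q ⟨r.n, by omega⟩).2 := e'
    _ = (Arena.FinRun.last r').2 := by
        unfold Arena.FinRun.last
        exact congrArg (fun i => (r'.q i).2) (Fin.ext (by simpa using hn))

lemma typeMoves_extend_last (r : T.PreRunF) (mv : T.RMove) (q' : T.Omega)
    (h : T.preArena.Tr (Arena.FinRun.last r) mv q') :
    T.typeMoves (r.extend mv q' h) r.n = some mv.2 := by
  unfold TimedGame.typeMoves
  rw [dif_pos (show r.n < (r.extend mv q' h).n from by
    exact Nat.lt_succ_self r.n)]
  exact congrArg some (congrArg Prod.snd (extend_m_mk r mv q' h rfl _))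

lemma typeMoves_play_last (μ : T.MinPre) (χ : T.MaxPre) (q : T.Omega) (n : ℕ) :
    T.typeMoves (Arena.play T.preArena μ χ q (n + 1)) n = some ((mvOf μ χ q n).2) := by
  have hl : (Arena.play T.preArena μ χ q n).n = n := play_len μ χ q n
  rw [play_succ_def]
  by_cases h : (T.preArena).IsMin (Arena.FinRun.last (Arena.play T.preArena μ χ q n))
  · rw [dif_pos h]
    have e := typeMoves_extend_last (Arena.play T.preArena μ χ q n)
      (μ.1 (Arena.play T.preArena μ χ q n)) _ (Classical.choose_spec (μ.2 _ h))
    rw [hl] at e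
    rw [e]
    unfold mvOf
    rw [if_pos h]
  · rw [dif_neg h]
    have e := typeMoves_extend_last (Arena.play T.preArena μ χ q n)
      (χ.1 (Arena.play T.preArena μ χ q n)) _ (Classical.choose_spec (χ.2 _ h))
    rw [hl] at e
    rw [e]
    unfold mvOf
    rw [if_neg h]

lemma isClosed_isVal : IsClosed {ν : T.C → ℝ | IsVal T.k ν} := by
  have : {ν : T.C → ℝ | IsVal T.k ν} = ⋂ c : T.C, (fun ν : T.C → ℝ => ν c) ⁻¹' Set.Icc 0 (T.k : ℝ) := by
    ext ν; simp [IsVal, Set.mem_Icc]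
  rw [this]
  exact isClosed_iInter fun c => (isClosed_Icc).preimage (continuous_apply c)

lemma closure_region_isVal (P : {P : Set (T.C → ℝ) // T.IsClockRegion P})
    {ν : T.C → ℝ} (h : ν ∈ closure P.1) : IsVal T.k ν := by
  obtain ⟨ν0, hP⟩ := P.2
  have hsub : P.1 ⊆ {ν : T.C → ℝ | IsVal T.k ν} := by
    rw [hP]; intro x hx; exact hx.1
  exact closure_minimal hsub isClosed_isVal h

end TGHelpers
section MainHelpers

variable {Conf Move : Type} {G : Arena Conf Move}

lemma mvOf_pos (μ : G.MinStrategy) (χ : G.MaxStrategy) (q0 : Conf) (n : ℕ)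
    (h : G.IsMin (G.play μ χ q0 n).last) : mvOf μ χ q0 n = μ.1 (G.play μ χ q0 n) := if_pos h

lemma mvOf_neg (μ : G.MinStrategy) (χ : G.MaxStrategy) (q0 : Conf) (n : ℕ)
    (h : ¬ G.IsMin (G.play μ χ q0 n).last) : mvOf μ χ q0 n = χ.1 (G.play μ χ q0 n) := if_neg h

end MainHelpers

lemma preArena_cost (T : TimedGame) (s : T.Omega) (m : T.RMove) :
    T.preArena.cost s m = m.1 := rfl

lemma key1 (T : TimedGame) (μ : T.MinPre) (hμCl : T.MinClosed μ) (ε : ℝ) (hε : 0 < ε)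
    (χ : T.MaxPre) (hχ : T.MaxTP χ) (χε : T.MaxPre) (hχε : T.EpsCloseMax χ χε ε)
    (q : T.Omega) (μ' : T.MinPre) (hμ' : T.MinTP μ')
    (hst : ∀ n : ℕ, T.sameType (Arena.play T.preArena μ' χ q n) (Arena.play T.preArena μ χε q n)) :
    ∀ n : ℕ,
      (Arena.FinRun.time (Arena.play T.preArena μ' χ q n)
        - Arena.FinRun.time (Arena.play T.preArena μ χε q n) ≤ n * ε) ∧
      ∀ c : T.C,
        (Arena.FinRun.time (Arena.play T.preArena μ' χ q n)
          - Arena.FinRun.time (Arena.play T.preArena μ χε q n))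
        - ((Arena.FinRun.last (Arena.play T.preArena μ' χ q n)).1.2 c
           - (Arena.FinRun.last (Arena.play T.preArena μ χε q n)).1.2 c) ≤ n * ε := by
  intro n
  induction n with
  | zero =>
    constructor
    · simp [play_zero_time]
    · intro c
      simp [play_zero_time, play_zero_last]
  | succ n ih =>
    obtain ⟨hD, hC⟩ := ih
    have hTr1 := play_succ_tr μ' χ q n
    have hTr2 := play_succ_tr μ χε q n
    have hTr1' : T.preTrans (Arena.FinRun.last (Arena.play T.preArena μ' χ q n)) (mvOf μ' χ q n)
        (Arena.FinRun.last (Arena.play T.preArena μ' χ q (n + 1))) := hTr1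
    have hTr2' : T.preTrans (Arena.FinRun.last (Arena.play T.preArena μ χε q n)) (mvOf μ χε q n)
        (Arena.FinRun.last (Arena.play T.preArena μ χε q (n + 1))) := hTr2
    have hreglast : (Arena.FinRun.last (Arena.play T.preArena μ' χ q n)).2
        = (Arena.FinRun.last (Arena.play T.preArena μ χε q n)).2 :=
      sameType_last_snd (hst n) (by rw [play_len, play_len])
    have hMinIff : T.preArena.IsMin (Arena.FinRun.last (Arena.play T.preArena μ' χ q n))
        ↔ T.preArena.IsMin (Arena.FinRun.last (Arena.play T.preArena μ χε q n)) := by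
      show (Arena.FinRun.last (Arena.play T.preArena μ' χ q n)).2.1 ∈ T.LMin
        ↔ (Arena.FinRun.last (Arena.play T.preArena μ χε q n)).2.1 ∈ T.LMin
      rw [hreglast]
    have hmv12 : (mvOf μ' χ q n).2 = (mvOf μ χε q n).2 := by
      have e1 := typeMoves_play_last μ' χ q n
      have e2 := typeMoves_play_last μ χε q n
      have e := congrFun (hst (n + 1)).2 n
      rw [e1, e2] at e
      exact Option.some.inj e
    -- key step inequality
    obtain ⟨c, hkey⟩ : ∃ c : T.C,
        (mvOf μ' χ q n).1 - (mvOf μ χε q n).1 ≤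
          max ((Arena.FinRun.last (Arena.play T.preArena μ χε q n)).1.2 c
              - (Arena.FinRun.last (Arena.play T.preArena μ' χ q n)).1.2 c) 0 + ε := by
      by_cases h : T.preArena.IsMin (Arena.FinRun.last (Arena.play T.preArena μ' χ q n))
      · -- Min step
        have h2 := hMinIff.mp h
        obtain ⟨h2eq, b, c, hbk, ht1, ht2⟩ := hμ'.2 _ _ (hst n)
        have hre : (μ'.1 (Arena.play T.preArena μ χε q n)).2
            = (μ.1 (Arena.play T.preArena μ χε q n)).2 := by
          rw [← h2eq, ← mvOf_pos μ' χ q n h, ← mvOf_pos μ χε q n h2, hmv12]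
        have hbnd := hμ'.1 (Arena.play T.preArena μ χε q n)
        rw [hre] at hbnd
        have hnn : (0:ℝ) ≤ (μ.1 (Arena.play T.preArena μ χε q n)).1 := by
          have := hTr2'.1
          rwa [mvOf_pos μ χε q n h2] at this
        have hcl := hμCl (Arena.play T.preArena μ χε q n)
        have hmem : (μ.1 (Arena.play T.preArena μ χε q n)).1 ∈
            {t : ℝ | 0 ≤ t ∧ (fun c => (Arena.FinRun.last (Arena.play T.preArena μ χε q n)).1.2 c + t)
              ∈ closure (μ.1 (Arena.play T.preArena μ χε q n)).2.1.2.1} := ⟨hnn, hcl⟩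
        have hsle := csInf_le ⟨0, fun t ht => ht.1⟩ hmem
        rw [← hbnd] at hsle
        have hdiff := tOf_diff (Arena.FinRun.last (Arena.play T.preArena μ' χ q n)).1
          (Arena.FinRun.last (Arena.play T.preArena μ χε q n)).1 b c
          (μ'.1 (Arena.play T.preArena μ' χ q n)).2.2
          (μ'.1 (Arena.play T.preArena μ χε q n)).2.2
        refine ⟨c, ?_⟩
        rw [mvOf_pos μ' χ q n h, mvOf_pos μ χε q n h2]
        linarith
      · -- Max step
        have h2 : ¬ T.preArena.IsMin (Arena.FinRun.last (Arena.play T.preArena μ χε q n)) :=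
          fun hh => h (hMinIff.mpr hh)
        obtain ⟨h2eq, b, c, hbk, ht1, ht2⟩ := hχ.2 _ _ (hst n)
        have hce := (hχε (Arena.play T.preArena μ χε q n)).2.2
        have hdiff := tOf_diff (Arena.FinRun.last (Arena.play T.preArena μ' χ q n)).1
          (Arena.FinRun.last (Arena.play T.preArena μ χε q n)).1 b c
          (χ.1 (Arena.play T.preArena μ' χ q n)).2.2
          (χ.1 (Arena.play T.preArena μ χε q n)).2.2
        refine ⟨c, ?_⟩
        rw [mvOf_neg μ' χ q n h, mvOf_neg μ χε q n h2]
        linarith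
    have htime1 := play_time_succ μ' χ q n
    have htime2 := play_time_succ μ χε q n
    rw [preArena_cost] at htime1 htime2
    have hcast : ((n + 1 : ℕ) : ℝ) = (n : ℝ) + 1 := by push_cast; ring
    have hmain : Arena.FinRun.time (Arena.play T.preArena μ' χ q (n + 1))
        - Arena.FinRun.time (Arena.play T.preArena μ χε q (n + 1)) ≤ ((n + 1 : ℕ) : ℝ) * ε := by
      rw [hcast]
      rcases le_total ((Arena.FinRun.last (Arena.play T.preArena μ χε q n)).1.2 c
          - (Arena.FinRun.last (Arena.play T.preArena μ' χ q n)).1.2 c) 0 with hmx | hmx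
      · rw [max_eq_right hmx] at hkey
        rw [htime1, htime2]
        linarith
      · rw [max_eq_left hmx] at hkey
        rw [htime1, htime2]
        linarith [hC c]
    refine ⟨hmain, ?_⟩
    intro c'
    have hv1 : (Arena.FinRun.last (Arena.play T.preArena μ' χ q (n + 1))).1.2
        = T.resetv (fun cc => (Arena.FinRun.last (Arena.play T.preArena μ' χ q n)).1.2 cc
            + (mvOf μ' χ q n).1) (T.ϱ ((mvOf μ' χ q n).2.2)) := by
      rw [hTr1'.2.2.2]
      rfl
    have hv2 : (Arena.FinRun.last (Arena.play T.preArena μ χε q (n + 1))).1.2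
        = T.resetv (fun cc => (Arena.FinRun.last (Arena.play T.preArena μ χε q n)).1.2 cc
            + (mvOf μ χε q n).1) (T.ϱ ((mvOf μ χε q n).2.2)) := by
      rw [hTr2'.2.2.2]
      rfl
    have ha : (mvOf μ' χ q n).2.2 = (mvOf μ χε q n).2.2 := by rw [hmv12]
    by_cases hc' : c' ∈ T.ϱ ((mvOf μ' χ q n).2.2)
    · have z1 : (Arena.FinRun.last (Arena.play T.preArena μ' χ q (n + 1))).1.2 c' = 0 := by
        rw [hv1]; simp [TimedGame.resetv, hc']
      have z2 : (Arena.FinRun.last (Arena.play T.preArena μ χε q (n + 1))).1.2 c' = 0 := by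
        rw [hv2]; simp [TimedGame.resetv, ← ha, hc']
      rw [z1, z2]
      linarith
    · have z1 : (Arena.FinRun.last (Arena.play T.preArena μ' χ q (n + 1))).1.2 c'
          = (Arena.FinRun.last (Arena.play T.preArena μ' χ q n)).1.2 c' + (mvOf μ' χ q n).1 := by
        rw [hv1]; simp [TimedGame.resetv, hc']
      have z2 : (Arena.FinRun.last (Arena.play T.preArena μ χε q (n + 1))).1.2 c'
          = (Arena.FinRun.last (Arena.play T.preArena μ χε q n)).1.2 c' + (mvOf μ χε q n).1 := by
        rw [hv2]; simp [TimedGame.resetv, ← ha, hc']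
      rw [z1, z2, htime1, htime2, hcast]
      have := hC c'
      linarith
lemma key2 (T : TimedGame) (χ : T.MaxPre) (hχCl : T.MaxClosed χ) (ε : ℝ) (hε : 0 < ε)
    (μ : T.MinPre) (hμ : T.MinTP μ) (με : T.MinPre) (hμε : T.EpsCloseMin μ με ε)
    (q : T.Omega) (χ' : T.MaxPre) (hχ' : T.MaxTP χ')
    (hst : ∀ n : ℕ, T.sameType (Arena.play T.preArena μ χ' q n) (Arena.play T.preArena με χ q n)) :
    ∀ n : ℕ,
      (Arena.FinRun.time (Arena.play T.preArena με χ q n)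
        - Arena.FinRun.time (Arena.play T.preArena μ χ' q n) ≤ n * ε) ∧
      ∀ c : T.C,
        (Arena.FinRun.time (Arena.play T.preArena με χ q n)
          - Arena.FinRun.time (Arena.play T.preArena μ χ' q n))
        - ((Arena.FinRun.last (Arena.play T.preArena με χ q n)).1.2 c
           - (Arena.FinRun.last (Arena.play T.preArena μ χ' q n)).1.2 c) ≤ n * ε := by
  intro n
  induction n with
  | zero =>
    constructor
    · simp [play_zero_time]
    · intro c
      simp [play_zero_time, play_zero_last]
  | succ n ih =>
    obtain ⟨hD, hC⟩ := ih
    have hTrA := play_succ_tr μ χ' q n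
    have hTrB := play_succ_tr με χ q n
    have hTrA' : T.preTrans (Arena.FinRun.last (Arena.play T.preArena μ χ' q n)) (mvOf μ χ' q n)
        (Arena.FinRun.last (Arena.play T.preArena μ χ' q (n + 1))) := hTrA
    have hTrB' : T.preTrans (Arena.FinRun.last (Arena.play T.preArena με χ q n)) (mvOf με χ q n)
        (Arena.FinRun.last (Arena.play T.preArena με χ q (n + 1))) := hTrB
    have hreglast : (Arena.FinRun.last (Arena.play T.preArena μ χ' q n)).2
        = (Arena.FinRun.last (Arena.play T.preArena με χ q n)).2 :=
      sameType_last_snd (hst n) (by rw [play_len, play_len])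
    have hMinIff : T.preArena.IsMin (Arena.FinRun.last (Arena.play T.preArena μ χ' q n))
        ↔ T.preArena.IsMin (Arena.FinRun.last (Arena.play T.preArena με χ q n)) := by
      show (Arena.FinRun.last (Arena.play T.preArena μ χ' q n)).2.1 ∈ T.LMin
        ↔ (Arena.FinRun.last (Arena.play T.preArena με χ q n)).2.1 ∈ T.LMin
      rw [hreglast]
    have hmv12 : (mvOf μ χ' q n).2 = (mvOf με χ q n).2 := by
      have e1 := typeMoves_play_last μ χ' q n
      have e2 := typeMoves_play_last με χ q n
      have e := congrFun (hst (n + 1)).2 n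
      rw [e1, e2] at e
      exact Option.some.inj e
    -- key step inequality
    obtain ⟨c, hkey⟩ : ∃ c : T.C,
        (mvOf με χ q n).1 - (mvOf μ χ' q n).1 ≤
          max ((Arena.FinRun.last (Arena.play T.preArena μ χ' q n)).1.2 c
              - (Arena.FinRun.last (Arena.play T.preArena με χ q n)).1.2 c) 0 + ε := by
      by_cases h : T.preArena.IsMin (Arena.FinRun.last (Arena.play T.preArena μ χ' q n))
      · -- Min step: μ is TP boundary, με is ε-close to μ
        have h2 := hMinIff.mp h
        obtain ⟨h2eq, b, c, hbk, htA, htB⟩ := hμ.2 _ _ (hst n)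
        have hce := (hμε (Arena.play T.preArena με χ q n)).2.2
        have hdiff := tOf_diff (Arena.FinRun.last (Arena.play T.preArena με χ q n)).1
          (Arena.FinRun.last (Arena.play T.preArena μ χ' q n)).1 b c
          (μ.1 (Arena.play T.preArena με χ q n)).2.2
          (μ.1 (Arena.play T.preArena μ χ' q n)).2.2
        refine ⟨c, ?_⟩
        rw [mvOf_pos με χ q n h2, mvOf_pos μ χ' q n h]
        linarith
      · -- Max step: χ' is TP boundary, χ is closed
        have h2 : ¬ T.preArena.IsMin (Arena.FinRun.last (Arena.play T.preArena με χ q n)) :=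
          fun hh => h (hMinIff.mpr hh)
        obtain ⟨h2eq, b, c, hbk, htA, htB⟩ := hχ'.2 _ _ (hst n)
        have hre : (χ'.1 (Arena.play T.preArena με χ q n)).2
            = (χ.1 (Arena.play T.preArena με χ q n)).2 := by
          rw [← h2eq, ← mvOf_neg μ χ' q n h, ← mvOf_neg με χ q n h2, hmv12]
        have hbnd := hχ'.1 (Arena.play T.preArena με χ q n)
        rw [hre] at hbnd
        have hnn : (0:ℝ) ≤ (χ.1 (Arena.play T.preArena με χ q n)).1 := by
          have := hTrB'.1
          rwa [mvOf_neg με χ q n h2] at this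
        have hcl := hχCl (Arena.play T.preArena με χ q n)
        have hmem : (χ.1 (Arena.play T.preArena με χ q n)).1 ∈
            {t : ℝ | 0 ≤ t ∧ (fun cc => (Arena.FinRun.last (Arena.play T.preArena με χ q n)).1.2 cc + t)
              ∈ closure (χ.1 (Arena.play T.preArena με χ q n)).2.1.2.1} := ⟨hnn, hcl⟩
        have hbdd : BddAbove {t : ℝ | 0 ≤ t ∧
            (fun cc => (Arena.FinRun.last (Arena.play T.preArena με χ q n)).1.2 cc + t)
              ∈ closure (χ.1 (Arena.play T.preArena με χ q n)).2.1.2.1} := by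
          refine ⟨(T.k : ℝ) - (Arena.FinRun.last (Arena.play T.preArena με χ q n)).1.2 c, ?_⟩
          intro t ht
          have hval := closure_region_isVal (χ.1 (Arena.play T.preArena με χ q n)).2.1.2 ht.2
          have := (hval c).2
          simp only [] at this
          linarith
        have hsle := le_csSup hbdd hmem
        rw [← hbnd] at hsle
        have hdiff := tOf_diff (Arena.FinRun.last (Arena.play T.preArena με χ q n)).1
          (Arena.FinRun.last (Arena.play T.preArena μ χ' q n)).1 b c
          (χ'.1 (Arena.play T.preArena με χ q n)).2.2
          (χ'.1 (Arena.play T.preArena μ χ' q n)).2.2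
        refine ⟨c, ?_⟩
        rw [mvOf_neg με χ q n h2, mvOf_neg μ χ' q n h]
        linarith
    have htimeA := play_time_succ μ χ' q n
    have htimeB := play_time_succ με χ q n
    rw [preArena_cost] at htimeA htimeB
    have hcast : ((n + 1 : ℕ) : ℝ) = (n : ℝ) + 1 := by push_cast; ring
    have hmain : Arena.FinRun.time (Arena.play T.preArena με χ q (n + 1))
        - Arena.FinRun.time (Arena.play T.preArena μ χ' q (n + 1)) ≤ ((n + 1 : ℕ) : ℝ) * ε := by
      rw [hcast]
      rcases le_total ((Arena.FinRun.last (Arena.play T.preArena μ χ' q n)).1.2 c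
          - (Arena.FinRun.last (Arena.play T.preArena με χ q n)).1.2 c) 0 with hmx | hmx
      · rw [max_eq_right hmx] at hkey
        rw [htimeA, htimeB]
        linarith
      · rw [max_eq_left hmx] at hkey
        rw [htimeA, htimeB]
        linarith [hC c]
    refine ⟨hmain, ?_⟩
    intro c'
    have hvA : (Arena.FinRun.last (Arena.play T.preArena μ χ' q (n + 1))).1.2
        = T.resetv (fun cc => (Arena.FinRun.last (Arena.play T.preArena μ χ' q n)).1.2 cc
            + (mvOf μ χ' q n).1) (T.ϱ ((mvOf μ χ' q n).2.2)) := by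
      rw [hTrA'.2.2.2]
      rfl
    have hvB : (Arena.FinRun.last (Arena.play T.preArena με χ q (n + 1))).1.2
        = T.resetv (fun cc => (Arena.FinRun.last (Arena.play T.preArena με χ q n)).1.2 cc
            + (mvOf με χ q n).1) (T.ϱ ((mvOf με χ q n).2.2)) := by
      rw [hTrB'.2.2.2]
      rfl
    have ha : (mvOf μ χ' q n).2.2 = (mvOf με χ q n).2.2 := by rw [hmv12]
    by_cases hc' : c' ∈ T.ϱ ((mvOf μ χ' q n).2.2)
    · have z1 : (Arena.FinRun.last (Arena.play T.preArena μ χ' q (n + 1))).1.2 c' = 0 := by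
        rw [hvA]; simp [TimedGame.resetv, hc']
      have z2 : (Arena.FinRun.last (Arena.play T.preArena με χ q (n + 1))).1.2 c' = 0 := by
        rw [hvB]; simp [TimedGame.resetv, ← ha, hc']
      rw [z1, z2]
      linarith
    · have z1 : (Arena.FinRun.last (Arena.play T.preArena μ χ' q (n + 1))).1.2 c'
          = (Arena.FinRun.last (Arena.play T.preArena μ χ' q n)).1.2 c' + (mvOf μ χ' q n).1 := by
        rw [hvA]; simp [TimedGame.resetv, hc']
      have z2 : (Arena.FinRun.last (Arena.play T.preArena με χ q (n + 1))).1.2 c'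
          = (Arena.FinRun.last (Arena.play T.preArena με χ q n)).1.2 c' + (mvOf με χ q n).1 := by
        rw [hvB]; simp [TimedGame.resetv, ← ha, hc']
      rw [z1, z2, htimeA, htimeB, hcast]
      have := hC c'
      linarith

/-- Against an `ε`-close perturbation of a type-preserving boundary strategy of
the opponent, the total time of the first `n` transitions differs from the
type-matching type-preserving answer against the unperturbed strategy by at
most `n·ε`. -/
theorem nstep_boundary_better_against_epsilon (T : TimedGame) :
    (∀ μ : T.MinPre, T.MinClosed μ → ∀ ε : ℝ, 0 < ε →
      ∀ χ : T.MaxPre, T.MaxTP χ → ∀ χε : T.MaxPre, T.EpsCloseMax χ χε ε →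
      ∀ q : T.Omega, T.barS q → ∀ μ' : T.MinPre, T.MinTP μ' →
      (∀ n : ℕ, T.sameType (Arena.play T.preArena μ' χ q n)
        (Arena.play T.preArena μ χε q n)) →
      ∀ n : ℕ,
        Arena.FinRun.time (Arena.play T.preArena μ' χ q n) - n * ε ≤
          Arena.FinRun.time (Arena.play T.preArena μ χε q n)) ∧
    (∀ χ : T.MaxPre, T.MaxClosed χ → ∀ ε : ℝ, 0 < ε →
      ∀ μ : T.MinPre, T.MinTP μ → ∀ με : T.MinPre, T.EpsCloseMin μ με ε →
      ∀ q : T.Omega, T.barS q → ∀ χ' : T.MaxPre, T.MaxTP χ' →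
      (∀ n : ℕ, T.sameType (Arena.play T.preArena μ χ' q n)
        (Arena.play T.preArena με χ q n)) →
      ∀ n : ℕ,
        Arena.FinRun.time (Arena.play T.preArena με χ q n) ≤
          Arena.FinRun.time (Arena.play T.preArena μ χ' q n) + n * ε) := by
  constructor
  · intro μ hμCl ε hε χ hχ χε hχε q hq μ' hμ' hst n
    have := (key1 T μ hμCl ε hε χ hχ χε hχε q μ' hμ' hst n).1
    linarith
  · intro χ hχCl ε hε μ hμ με hμε q hq χ' hχ' hst n
    have := (key2 T χ hχCl ε hε μ hμ με hμε q χ' hχ' hst n).1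
    linarith
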